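/- arXiv:1512.03735 — 2 statements merged into one kernel-verified Lean document; each statement's English description precedes it below -/
import Mathlib

section
/- Let H be a real Hilbert space, B : H × H → ℝ a continuous bilinear form that is coercive with constant α > 0 (i.e. B(u,u) ≥ α‖u‖² for all u ∈ H), and F : H → H a Lipschitz map with Lipschitz constant L ≥ 0. If κ := L/α < 1, then there exists a unique u ∈ H such that B(u, ψ) = ⟨F(u), ψ⟩ for all ψ ∈ H. Moreover, if u₀ = 0 and, for each n, u_{n+1} is the unique element (given by the Lax–Milgram theorem) satisfying B(u_{n+1}, ψ) = ⟨F(u_n), ψ⟩ for all ψ ∈ H, then ‖u_n − u‖ ≤ κⁿ/(1 − κ) · ‖u₁‖ for every n ∈ ℕ. -/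
open scoped RealInnerProductSpace

/-- Abstract Hilbert-space form of Theorem 3.6 (Theorem 9) of the paper:
existence, uniqueness and geometric convergence of the linearization scheme. -/
theorem stmt_0 {H : Type*} [NormedAddCommGroup H] [InnerProductSpace ℝ H] [CompleteSpace H]
    (B : H →L[ℝ] H →L[ℝ] ℝ) (α : ℝ) (hα : 0 < α)
    (hcoer : ∀ u : H, α * ‖u‖ ^ 2 ≤ B u u)
    (F : H → H) (L : ℝ) (hL : 0 ≤ L)
    (hF : ∀ x y : H, ‖F x - F y‖ ≤ L * ‖x - y‖)
    (κ : ℝ) (hκdef : κ = L / α) (hκ : κ < 1) :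
    (∃! u : H, ∀ ψ : H, B u ψ = ⟪F u, ψ⟫) ∧
    (∀ (v : ℕ → H) (ustar : H), v 0 = 0 →
      (∀ (n : ℕ) (ψ : H), B (v (n + 1)) ψ = ⟪F (v n), ψ⟫) →
      (∀ ψ : H, B ustar ψ = ⟪F ustar, ψ⟫) →
      ∀ n : ℕ, ‖v n - ustar‖ ≤ κ ^ n / (1 - κ) * ‖v 1‖) := by
  have hκ0 : 0 ≤ κ := by rw [hκdef]; positivity
  -- key stability estimate
  have key : ∀ (u u' f g : H), (∀ ψ, B u ψ = ⟪f, ψ⟫) → (∀ ψ, B u' ψ = ⟪g, ψ⟫) →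
      ‖u - u'‖ ≤ α⁻¹ * ‖f - g‖ := by
    intro u u' f g hu hu'
    have h1 : α * ‖u - u'‖ ^ 2 ≤ ‖f - g‖ * ‖u - u'‖ := by
      calc α * ‖u - u'‖ ^ 2 ≤ B (u - u') (u - u') := hcoer _
        _ = B u (u - u') - B u' (u - u') := by simp only [map_sub, ContinuousLinearMap.sub_apply]; ring
        _ = ⟪f, u - u'⟫ - ⟪g, u - u'⟫ := by rw [hu, hu']
        _ = ⟪f - g, u - u'⟫ := (inner_sub_left _ _ _).symm
        _ ≤ ‖f - g‖ * ‖u - u'‖ := real_inner_le_norm _ _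
    rcases eq_or_lt_of_le (norm_nonneg (u - u')) with h0 | h0
    · rw [← h0]; positivity
    · rw [le_inv_mul_iff₀ hα]
      nlinarith
  -- contraction estimate
  have step : ∀ (u u' x y : H), (∀ ψ, B u ψ = ⟪F x, ψ⟫) → (∀ ψ, B u' ψ = ⟪F y, ψ⟫) →
      ‖u - u'‖ ≤ κ * ‖x - y‖ := by
    intro u u' x y hu hu'
    calc ‖u - u'‖ ≤ α⁻¹ * ‖F x - F y‖ := key _ _ _ _ hu hu'
      _ ≤ α⁻¹ * (L * ‖x - y‖) := by
          have := hF x y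
          have h2 : (0:ℝ) ≤ α⁻¹ := by positivity
          nlinarith
      _ = κ * ‖x - y‖ := by rw [hκdef]; field_simp
  -- Lax-Milgram equivalence
  have hcoB : IsCoercive B := ⟨α, hα, fun u => by have := hcoer u; nlinarith [sq_nonneg ‖u‖, sq_abs ‖u‖]⟩
  set e := hcoB.continuousLinearEquivOfBilin with he
  have hsolve : ∀ f : H, ∀ ψ : H, B (e.symm f) ψ = ⟪f, ψ⟫ := by
    intro f ψ
    have h2 := hcoB.continuousLinearEquivOfBilin_apply (e.symm f) ψ
    rw [e.apply_symm_apply] at h2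
    exact h2.symm
  set T : H → H := fun x => e.symm (F x) with hT
  have hTsol : ∀ x ψ, B (T x) ψ = ⟪F x, ψ⟫ := fun x ψ => hsolve (F x) ψ
  have hTlip : LipschitzWith κ.toNNReal T := by
    intro x y
    rw [edist_dist, edist_dist, dist_eq_norm, dist_eq_norm]
    have := step (T x) (T y) x y (hTsol x) (hTsol y)
    calc ENNReal.ofReal ‖T x - T y‖ ≤ ENNReal.ofReal (κ * ‖x - y‖) := ENNReal.ofReal_le_ofReal this
      _ = ENNReal.ofReal κ * ENNReal.ofReal ‖x - y‖ := ENNReal.ofReal_mul hκ0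
      _ = ↑κ.toNNReal * ENNReal.ofReal ‖x - y‖ := by rw [ENNReal.ofReal]
  have hcontr : ContractingWith κ.toNNReal T := by
    constructor
    · exact_mod_cast Real.toNNReal_lt_one.mpr hκ
    · exact hTlip
  have : Nonempty H := ⟨0⟩
  set u : H := ContractingWith.fixedPoint T hcontr with hu
  have hufix : T u = u := hcontr.fixedPoint_isFixedPt
  have husol : ∀ ψ : H, B u ψ = ⟪F u, ψ⟫ := by
    intro ψ
    have h := hTsol u ψ
    rwa [hufix] at h
  have huniq : ∀ w : H, (∀ ψ : H, B w ψ = ⟪F w, ψ⟫) → w = u := by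
    intro w hw
    have h1 : ‖w - u‖ ≤ κ * ‖w - u‖ := step w u w u hw husol
    have : ‖w - u‖ = 0 := by nlinarith [norm_nonneg (w - u)]
    exact sub_eq_zero.mp (norm_eq_zero.mp this)
  constructor
  · exact ⟨u, husol, huniq⟩
  · intro v ustar hv0 hvrec hustar
    have hrec : ∀ n, ‖v (n + 1) - ustar‖ ≤ κ * ‖v n - ustar‖ := by
      intro n
      exact step (v (n + 1)) ustar (v n) ustar (hvrec n) hustar
    have hgeo : ∀ n, ‖v n - ustar‖ ≤ κ ^ n * ‖ustar‖ := by
      intro n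
      induction n with
      | zero => simp [hv0]
      | succ n ih =>
        calc ‖v (n + 1) - ustar‖ ≤ κ * ‖v n - ustar‖ := hrec n
          _ ≤ κ * (κ ^ n * ‖ustar‖) := by nlinarith
          _ = κ ^ (n + 1) * ‖ustar‖ := by ring
    have hstar : ‖ustar‖ ≤ ‖v 1‖ / (1 - κ) := by
      have h1 : ‖v 1 - ustar‖ ≤ κ * ‖ustar‖ := by
        have := hrec 0
        rw [hv0] at this; simpa using this
      have h2 : ‖ustar‖ - ‖v 1‖ ≤ ‖v 1 - ustar‖ := by
        have h3 := norm_sub_norm_le ustar (v 1)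
        rwa [norm_sub_rev] at h3
      rw [le_div_iff₀ (by linarith : (0:ℝ) < 1 - κ)]
      nlinarith
    intro n
    have hκn : (0:ℝ) ≤ κ ^ n := pow_nonneg hκ0 n
    calc ‖v n - ustar‖ ≤ κ ^ n * ‖ustar‖ := hgeo n
      _ ≤ κ ^ n * (‖v 1‖ / (1 - κ)) := by nlinarith
      _ = κ ^ n / (1 - κ) * ‖v 1‖ := by ring
end

section
/- Let q > 2 and C ≥ 1/2 be real numbers, set r_n := 2·(q/2)^n for n ∈ ℕ, and let a : ℕ → ℝ be a sequence of nonnegative reals satisfying a(n+1) ≤ (C·r_n)^{1/r_n} · a(n) for all n ∈ ℕ. Then for every n ∈ ℕ, a(n) ≤ ((2C)^{q/(q−2)} · q^{2q/(q−2)²})^{1/2} · a(0). -/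
/-- The iterated Sobolev-trace recurrence of the Moser iteration in Lemma 3.3 of the paper
yields the uniform bound (3.11) with constant independent of `n`. -/
theorem stmt_4 (q C : ℝ) (hq : 2 < q) (hC : 1 / 2 ≤ C)
    (r : ℕ → ℝ) (hr : ∀ n : ℕ, r n = 2 * (q / 2) ^ n)
    (a : ℕ → ℝ) (ha : ∀ n : ℕ, 0 ≤ a n)
    (hrec : ∀ n : ℕ, a (n + 1) ≤ (C * r n) ^ ((1 : ℝ) / r n) * a n) :
    ∀ n : ℕ, a n ≤ ((2 * C) ^ (q / (q - 2)) * q ^ (2 * q / (q - 2) ^ 2)) ^ ((1 : ℝ) / 2) * a 0 := by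
  have hq0 : (0:ℝ) < q := by linarith
  have hq2 : (0:ℝ) < q - 2 := by linarith
  have hC0 : (0:ℝ) < C := by linarith
  have h2C : (1:ℝ) ≤ 2 * C := by linarith
  have hq20 : (0:ℝ) < q / 2 := by linarith
  have hrpos : ∀ k, 0 < r k := fun k => by
    rw [hr k]; positivity
  have hCrpos : ∀ k, 0 < C * r k := fun k => mul_pos hC0 (hrpos k)
  set K : ℝ := ((2 * C) ^ (q / (q - 2)) * q ^ (2 * q / (q - 2) ^ 2)) ^ ((1 : ℝ) / 2) with hKdef
  set P : ℕ → ℝ := fun n => ∏ k ∈ Finset.range n, (C * r k) ^ ((1:ℝ) / r k) with hPdef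
  have hPpos : ∀ n, 0 < P n := fun n =>
    Finset.prod_pos (fun k _ => Real.rpow_pos_of_pos (hCrpos k) _)
  have hPa : ∀ n, a n ≤ P n * a 0 := by
    intro n
    induction n with
    | zero => simp [hPdef]
    | succ m ih =>
      have h1 : a (m+1) ≤ (C * r m) ^ ((1:ℝ) / r m) * a m := hrec m
      have h2 : (C * r m) ^ ((1:ℝ) / r m) * a m
          ≤ (C * r m) ^ ((1:ℝ) / r m) * (P m * a 0) :=
        mul_le_mul_of_nonneg_left ih (le_of_lt (Real.rpow_pos_of_pos (hCrpos m) _))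
      have h3 : P (m+1) = (C * r m) ^ ((1:ℝ) / r m) * P m := by
        simp [hPdef, Finset.prod_range_succ, mul_comm]
      calc a (m+1) ≤ (C * r m) ^ ((1:ℝ) / r m) * (P m * a 0) := le_trans h1 h2
        _ = P (m+1) * a 0 := by rw [h3]; ring
  have hKpos : 0 < K := by
    apply Real.rpow_pos_of_pos
    exact mul_pos (Real.rpow_pos_of_pos (by linarith) _) (Real.rpow_pos_of_pos hq0 _)
  -- the key bound: P n ≤ K
  have hPK : ∀ n, P n ≤ K := by
    intro n
    set t : ℝ := 2 / q with htdef
    have ht0 : 0 < t := by positivity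
    have ht1 : t < 1 := by rw [htdef, div_lt_one hq0]; linarith
    have h1t : 0 < 1 - t := by linarith
    set L1 : ℝ := Real.log (2 * C) with hL1
    set L2 : ℝ := Real.log q with hL2
    have hL1nn : 0 ≤ L1 := Real.log_nonneg h2C
    have hL2nn : 0 ≤ L2 := Real.log_nonneg (by linarith)
    -- log of each factor
    have hterm : ∀ k, Real.log ((C * r k) ^ ((1:ℝ) / r k))
        ≤ (L1 / 2) * t ^ k + (L2 / 2) * (k * t ^ k) := by
      intro k
      rw [Real.log_rpow (hCrpos k)]
      have hinv : (1:ℝ) / r k = (1/2) * t ^ k := by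
        rw [hr k, htdef]
        rw [div_pow, div_pow]
        field_simp
      have hlog : Real.log (C * r k) = L1 + k * Real.log (q / 2) := by
        have : C * r k = (2 * C) * (q / 2) ^ k := by rw [hr k]; ring
        rw [this, Real.log_mul (by linarith) (by positivity), Real.log_pow, hL1]
      rw [hinv, hlog]
      have hlogle : Real.log (q / 2) ≤ L2 := by
        rw [hL2]
        exact Real.log_le_log (by positivity) (by linarith)
      have htk : (0:ℝ) ≤ t ^ k := le_of_lt (pow_pos ht0 k)
      have : (1/2 : ℝ) * t ^ k * (L1 + k * Real.log (q/2))
          ≤ (1/2 : ℝ) * t ^ k * (L1 + k * L2) := by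
        apply mul_le_mul_of_nonneg_left _ (by positivity)
        have : (k:ℝ) * Real.log (q/2) ≤ k * L2 :=
          mul_le_mul_of_nonneg_left hlogle (Nat.cast_nonneg k)
        linarith
      calc (1/2 : ℝ) * t ^ k * (L1 + k * Real.log (q/2))
          ≤ (1/2 : ℝ) * t ^ k * (L1 + k * L2) := this
        _ = (L1 / 2) * t ^ k + (L2 / 2) * (k * t ^ k) := by ring
    -- sum of the majorant
    have hS : HasSum (fun k : ℕ => (L1 / 2) * t ^ k + (L2 / 2) * ((k:ℝ) * t ^ k))
        ((L1 / 2) * (1 - t)⁻¹ + (L2 / 2) * (t / (1 - t) ^ 2)) := by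
      exact ((hasSum_geometric_of_lt_one (le_of_lt ht0) ht1).mul_left (L1/2)).add
        ((hasSum_coe_mul_geometric_of_norm_lt_one
          (by rw [Real.norm_eq_abs, abs_of_pos ht0]; exact ht1)).mul_left (L2/2))
    have hsum_le : ∑ k ∈ Finset.range n,
        ((L1 / 2) * t ^ k + (L2 / 2) * ((k:ℝ) * t ^ k))
        ≤ (L1 / 2) * (1 - t)⁻¹ + (L2 / 2) * (t / (1 - t) ^ 2) := by
      apply sum_le_hasSum _ _ hS
      intro k _
      have := pow_pos ht0 k
      positivity
    -- identify the limit with log K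
    have hlogK : Real.log K = (L1 / 2) * (1 - t)⁻¹ + (L2 / 2) * (t / (1 - t) ^ 2) := by
      rw [hKdef]
      rw [Real.log_rpow (mul_pos (Real.rpow_pos_of_pos (by linarith) _)
        (Real.rpow_pos_of_pos hq0 _))]
      rw [Real.log_mul (ne_of_gt (Real.rpow_pos_of_pos (by linarith) _))
        (ne_of_gt (Real.rpow_pos_of_pos hq0 _))]
      rw [Real.log_rpow (by linarith : (0:ℝ) < 2 * C), Real.log_rpow hq0]
      rw [← hL1, ← hL2, htdef]
      have hqne : q ≠ 0 := ne_of_gt hq0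
      have hq2ne : q - 2 ≠ 0 := ne_of_gt hq2
      field_simp
    -- conclude P n ≤ K via logs
    have hlogP : Real.log (P n) ≤ Real.log K := by
      rw [hPdef]
      rw [Real.log_prod (fun k _ => ne_of_gt (Real.rpow_pos_of_pos (hCrpos k) _))]
      rw [hlogK]
      calc ∑ k ∈ Finset.range n, Real.log ((C * r k) ^ ((1:ℝ) / r k))
          ≤ ∑ k ∈ Finset.range n, ((L1 / 2) * t ^ k + (L2 / 2) * ((k:ℝ) * t ^ k)) :=
            Finset.sum_le_sum (fun k _ => hterm k)
        _ ≤ _ := hsum_le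
    exact (Real.log_le_log_iff (hPpos n) hKpos).mp hlogP
  intro n
  calc a n ≤ P n * a 0 := hPa n
    _ ≤ K * a 0 := mul_le_mul_of_nonneg_right (hPK n) (ha 0)
end
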